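/- Let F be the set of functions f : ℕ → ℤ such that f(x) is odd for all x and 2^{n+1} divides (Δⁿf)(x) for all n ≥ 1 and all x. If f, g ∈ F, then the function ⟨f,g⟩(x) = (f(x+1)·g(x) + f(x)·g(x+1))/2 is integer-valued and belongs to F. -/
import Mathlib

/-- The forward difference operator. -/
def Δ (f : ℕ → ℤ) : ℕ → ℤ := fun x => f (x + 1) - f x

lemma Δ_shift (w : ℕ → ℤ) (n : ℕ) (x : ℕ) :
    Δ^[n] (fun y => w (y + 1)) x = Δ^[n] w (x + 1) := by
  induction n generalizing w with
  | zero => simp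
  | succ n ih =>
      rw [Function.iterate_succ_apply, Function.iterate_succ_apply]
      have : Δ (fun y => w (y + 1)) = (fun y => Δ w (y + 1)) := rfl
      rw [this, ih]

lemma Δ_add (u v : ℕ → ℤ) : Δ (fun y => u y + v y) = fun y => Δ u y + Δ v y := by
  funext y; simp [Δ]; ring

lemma Δ_iter_add (u v : ℕ → ℤ) (n : ℕ) (x : ℕ) :
    Δ^[n] (fun y => u y + v y) x = Δ^[n] u x + Δ^[n] v x := by
  induction n generalizing u v with
  | zero => simp
  | succ n ih =>
      rw [Function.iterate_succ_apply, Function.iterate_succ_apply,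
        Function.iterate_succ_apply, Δ_add, ih]

lemma Δ_iter_two_mul (u : ℕ → ℤ) (n : ℕ) (x : ℕ) :
    Δ^[n] (fun y => 2 * u y) x = 2 * Δ^[n] u x := by
  induction n generalizing u with
  | zero => simp
  | succ n ih =>
      rw [Function.iterate_succ_apply, Function.iterate_succ_apply]
      have : Δ (fun y => 2 * u y) = fun y => 2 * Δ u y := by
        funext y; simp [Δ]; ring
      rw [this, ih]

lemma leibniz (u v : ℕ → ℤ) (n : ℕ) (x : ℕ) :
    Δ^[n] (fun y => u y * v y) x
      = ∑ k ∈ Finset.range (n + 1),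
          (n.choose k : ℤ) * Δ^[k] u x * Δ^[n - k] v (x + k) := by
  induction n generalizing u v with
  | zero => simp
  | succ n ih =>
      have hprod : Δ (fun y => u y * v y)
          = fun y => (Δ u y) * v (y + 1) + u y * (Δ v y) := by
        funext y; simp [Δ]; ring
      rw [Function.iterate_succ_apply, hprod, Δ_iter_add]
      have hT1 : Δ^[n] (fun y => Δ u y * v (y + 1)) x
          = ∑ k ∈ Finset.range (n + 1),
              (n.choose k : ℤ) * Δ^[k + 1] u x * Δ^[n + 1 - (k + 1)] v (x + (k + 1)) := by
        rw [ih (Δ u) (fun y => v (y + 1))]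
        refine Finset.sum_congr rfl fun k hk => ?_
        rw [← Function.iterate_succ_apply, Δ_shift]
        have h1 : n + 1 - (k + 1) = n - k := by omega
        have h2 : x + k + 1 = x + (k + 1) := by omega
        rw [h1, h2]
      have hT2 : Δ^[n] (fun y => u y * Δ v y) x
          = ∑ k ∈ Finset.range (n + 1),
              (n.choose k : ℤ) * Δ^[k] u x * Δ^[n + 1 - k] v (x + k) := by
        rw [ih u (Δ v)]
        refine Finset.sum_congr rfl fun k hk => ?_
        simp only [Finset.mem_range] at hk
        rw [← Function.iterate_succ_apply]
        have h1 : (n - k).succ = n + 1 - k := by omega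
        rw [h1]
      rw [hT1, hT2]
      rw [Finset.sum_range_succ'
        (fun k => (((n+1).choose k : ℤ)) * Δ^[k] u x * Δ^[n + 1 - k] v (x + k)) (n+1)]
      simp only [Nat.choose_succ_succ, Nat.cast_add]
      have hsplit : (∑ i ∈ Finset.range (n + 1),
          ((n.choose i : ℤ) + (n.choose (i+1) : ℤ)) * Δ^[i + 1] u x * Δ^[n + 1 - (i + 1)] v (x + (i + 1)))
        = (∑ i ∈ Finset.range (n + 1),
            (n.choose i : ℤ) * Δ^[i + 1] u x * Δ^[n + 1 - (i + 1)] v (x + (i + 1)))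
          + (∑ i ∈ Finset.range (n + 1),
            (n.choose (i+1) : ℤ) * Δ^[i + 1] u x * Δ^[n + 1 - (i + 1)] v (x + (i + 1))) := by
        rw [← Finset.sum_add_distrib]; exact Finset.sum_congr rfl fun k _ => by ring
      rw [hsplit]
      have hrest : (∑ i ∈ Finset.range (n + 1),
            (n.choose (i+1) : ℤ) * Δ^[i + 1] u x * Δ^[n + 1 - (i + 1)] v (x + (i + 1)))
          + ((n+1).choose 0 : ℤ) * Δ^[0] u x * Δ^[n + 1 - 0] v (x + 0)
          = ∑ k ∈ Finset.range (n + 1),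
              (n.choose k : ℤ) * Δ^[k] u x * Δ^[n + 1 - k] v (x + k) := by
        have hext : ∑ k ∈ Finset.range (n + 2), (n.choose k : ℤ) * Δ^[k] u x * Δ^[n + 1 - k] v (x + k)
            = ∑ k ∈ Finset.range (n + 1), (n.choose k : ℤ) * Δ^[k] u x * Δ^[n + 1 - k] v (x + k) := by
          rw [Finset.sum_range_succ]; simp
        rw [← hext, Finset.sum_range_succ'
          (fun k => (n.choose k : ℤ) * Δ^[k] u x * Δ^[n + 1 - k] v (x + k)) (n+1)]
        simp
      linarith [hrest]

lemma Δ_iter_succ_sub (w : ℕ → ℤ) (n x : ℕ) :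
    Δ^[n + 1] w x = Δ^[n] w (x + 1) - Δ^[n] w x := by
  rw [Function.iterate_succ_apply']; rfl

lemma key0 (n : ℕ) (a b c d : ℤ) (hab : (2:ℤ) ∣ (a + b)) (hc : (2:ℤ)^(n+1) ∣ c)
    (hd : (2:ℤ)^(n+2) ∣ (d - c)) : (2:ℤ)^(n+2) ∣ a * c + b * d := by
  have h1 : (2:ℤ)^(n+2) ∣ (a + b) * c := by
    have : (2:ℤ)^(n+2) = 2 * 2^(n+1) := by ring
    rw [this]
    exact mul_dvd_mul hab hc
  have h2 : (2:ℤ)^(n+2) ∣ b * (d - c) := hd.mul_left b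
  have h3 : a * c + b * d = (a + b) * c + b * (d - c) := by ring
  rw [h3]
  exact dvd_add h1 h2

/-- The class `F` is closed under `⟨f,g⟩(x) = (f(x+1)g(x) + f(x)g(x+1))/2`,
which is integer-valued. -/
theorem pairing_mem_F (f g : ℕ → ℤ)
    (hfodd : ∀ x, Odd (f x))
    (hfdvd : ∀ n ≥ 1, ∀ x, (2 : ℤ) ^ (n + 1) ∣ Δ^[n] f x)
    (hgodd : ∀ x, Odd (g x))
    (hgdvd : ∀ n ≥ 1, ∀ x, (2 : ℤ) ^ (n + 1) ∣ Δ^[n] g x) :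
    (∀ x, (2 : ℤ) ∣ f (x + 1) * g x + f x * g (x + 1)) ∧
      (∀ x, Odd ((f (x + 1) * g x + f x * g (x + 1)) / 2)) ∧
      ∀ n ≥ 1, ∀ x, (2 : ℤ) ^ (n + 1) ∣
        Δ^[n] (fun x => (f (x + 1) * g x + f x * g (x + 1)) / 2) x := by
  have hdvd2 : ∀ x, (2 : ℤ) ∣ f (x + 1) * g x + f x * g (x + 1) := by
    intro x
    exact (((hfodd (x+1)).mul (hgodd x)).add_odd ((hfodd x).mul (hgodd (x+1)))).two_dvd
  refine ⟨hdvd2, ?_, ?_⟩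
  · intro x
    obtain ⟨a, ha⟩ := hfdvd 1 le_rfl x
    obtain ⟨b, hb⟩ := hgdvd 1 le_rfl x
    have ha' : f (x + 1) - f x = 4 * a := by
      have : Δ^[1] f x = f (x + 1) - f x := by simp [Δ]
      rw [this] at ha; norm_num at ha; linarith
    have hb' : g (x + 1) - g x = 4 * b := by
      have : Δ^[1] g x = g (x + 1) - g x := by simp [Δ]
      rw [this] at hb; norm_num at hb; linarith
    have key : f (x + 1) * g x + f x * g (x + 1)
        = 2 * (f x * g x + 2 * (a * g x + f x * b)) := by
      have h1 : f (x + 1) = f x + 4 * a := by linarith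
      have h2 : g (x + 1) = g x + 4 * b := by linarith
      rw [h1, h2]; ring
    rw [key, Int.mul_ediv_cancel_left _ (by norm_num)]
    obtain ⟨t, ht⟩ := (hfodd x).mul (hgodd x)
    exact ⟨t + (a * g x + f x * b), by rw [ht]; ring⟩
  · intro n hn x
    have hnum : (fun y => 2 * ((f (y + 1) * g y + f y * g (y + 1)) / 2))
        = fun y => f (y + 1) * g y + f y * g (y + 1) := by
      funext y; exact Int.mul_ediv_cancel' (hdvd2 y)
    have h2 : 2 * Δ^[n] (fun x => (f (x + 1) * g x + f x * g (x + 1)) / 2) x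
        = Δ^[n] (fun y => f (y + 1) * g y + f y * g (y + 1)) x := by
      rw [← Δ_iter_two_mul, hnum]
    have hsum : Δ^[n] (fun y => f (y + 1) * g y + f y * g (y + 1)) x
        = ∑ k ∈ Finset.range (n + 1),
            ((n.choose k : ℤ) * Δ^[k] f (x + 1) * Δ^[n - k] g (x + k)
              + (n.choose k : ℤ) * Δ^[k] f x * Δ^[n - k] g (x + k + 1)) := by
      rw [Δ_iter_add (fun y => f (y + 1) * g y) (fun y => f y * g (y + 1)) n x,
        leibniz (fun y => f (y + 1)) g n x, leibniz f (fun y => g (y + 1)) n x,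
        ← Finset.sum_add_distrib]
      refine Finset.sum_congr rfl fun k hk => ?_
      rw [Δ_shift f k x, Δ_shift g (n - k) (x + k)]
    have hdvdsum : (2:ℤ)^(n+2) ∣ ∑ k ∈ Finset.range (n + 1),
            ((n.choose k : ℤ) * Δ^[k] f (x + 1) * Δ^[n - k] g (x + k)
              + (n.choose k : ℤ) * Δ^[k] f x * Δ^[n - k] g (x + k + 1)) := by
      refine Finset.dvd_sum fun k hk => ?_
      simp only [Finset.mem_range] at hk
      rcases eq_or_ne k 0 with rfl | hk0
      · have heq : ((n.choose 0 : ℤ) * Δ^[0] f (x + 1) * Δ^[n - 0] g (x + 0)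
              + (n.choose 0 : ℤ) * Δ^[0] f x * Δ^[n - 0] g (x + 0 + 1))
            = f (x + 1) * Δ^[n] g x + f x * Δ^[n] g (x + 1) := by
          simp
        rw [heq]
        refine key0 n _ _ _ _ ?_ (hgdvd n hn x) ?_
        · exact ((hfodd (x+1)).add_odd (hfodd x)).two_dvd
        · rw [← Δ_iter_succ_sub]
          exact hgdvd (n + 1) (by omega) x
      rcases eq_or_ne k n with rfl | hkn
      · have heq : ((k.choose k : ℤ) * Δ^[k] f (x + 1) * Δ^[k - k] g (x + k)
              + (k.choose k : ℤ) * Δ^[k] f x * Δ^[k - k] g (x + k + 1))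
            = g (x + k + 1) * Δ^[k] f x + g (x + k) * Δ^[k] f (x + 1) := by
          simp [Nat.sub_self]; ring
        rw [heq]
        refine key0 k _ _ _ _ ?_ (hfdvd k (by omega) x) ?_
        · exact ((hgodd (x + k + 1)).add_odd (hgodd (x + k))).two_dvd
        · rw [← Δ_iter_succ_sub]
          exact hfdvd (k + 1) (by omega) x
      · have hk1 : 1 ≤ k := by omega
        have hkn' : k < n := by omega
        have hepow : (2:ℤ)^(k+1) * (2:ℤ)^(n-k+1) = (2:ℤ)^(n+2) := by
          rw [← pow_add]; congr 1; omega
        refine dvd_add ?_ ?_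
        · have hAB := mul_dvd_mul (hfdvd k hk1 (x + 1)) (hgdvd (n - k) (by omega) (x + k))
          rw [hepow] at hAB
          rw [mul_assoc]
          exact hAB.mul_left _
        · have hAB := mul_dvd_mul (hfdvd k hk1 x) (hgdvd (n - k) (by omega) (x + k + 1))
          rw [hepow] at hAB
          rw [mul_assoc]
          exact hAB.mul_left _
    rw [← hsum, ← h2] at hdvdsum
    have hpow : (2:ℤ)^(n+2) = 2 * 2^(n+1) := by ring
    rw [hpow] at hdvdsum
    exact (mul_dvd_mul_iff_left (by norm_num : (2:ℤ) ≠ 0)).mp hdvdsum
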